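/- arXiv:2210.10532 — 5 statements merged into one kernel-verified Lean document; each statement's English description precedes it below -/
import Mathlib

section
/- For any α ∈ ℝ^d, the set S₁(α) = {k ∈ ℝ^d : there exist s,w ∈ {1,…,Q} with λ_A^s(k+α) = λ_A^w(k)} either equals all of ℝ^d or has Lebesgue measure zero. -/
open MeasureTheory Polynomial

noncomputable section

/-- Multivariate Laurent polynomials in `d` variables over `ℂ`. -/
abbrev MvL (d : ℕ) : Type := AddMonoidAlgebra ℂ (Fin d →₀ ℤ)

/-- Evaluation of a Laurent polynomial at a point `z ∈ (ℂ^*)^d`. -/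
noncomputable def evalMvL {d : ℕ} (z : Fin d → ℂ) (p : MvL d) : ℂ :=
  Finsupp.sum p.coeff fun n c => c * ∏ j, z j ^ (n j)

/-- Evaluation of an element of `(MvL d)[λ]` at `(z, lam)`. -/
noncomputable def evalP {d : ℕ} (z : Fin d → ℂ) (lam : ℂ) (P : Polynomial (MvL d)) : ℂ :=
  P.sum fun m a => evalMvL z a * lam ^ m

/-- `det (𝒜(z) - λ I)` as a Laurent polynomial in `z` and polynomial in `λ`. -/
noncomputable def detP {d Q : ℕ} (M : Matrix (Fin Q) (Fin Q) (MvL d)) : Polynomial (MvL d) :=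
  Matrix.det (Matrix.of fun i j => Polynomial.C (M i j) - if i = j then Polynomial.X else 0)



/-- The unique Floquet extension: for `u` on the fundamental domain `W = ∏ [0, q j)`,
`extPer q hq z u m` is `ũ(m)` where `ũ(n + q j • e j) = z j * ũ(n)`. -/
noncomputable def extPer {d : ℕ} (q : Fin d → ℕ) (hq : ∀ j, 0 < q j) (z : Fin d → ℂ)
    (u : ((j : Fin d) → Fin (q j)) → ℂ) (m : Fin d → ℤ) : ℂ :=
  (∏ j, z j ^ (m j / (q j : ℤ))) *
    u (fun j => ⟨(m j % (q j : ℤ)).toNat, by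
      have h0 : (0:ℤ) < (q j : ℤ) := by exact_mod_cast hq j
      have h1 : 0 ≤ m j % (q j : ℤ) := Int.emod_nonneg _ h0.ne'
      have h2 : m j % (q j : ℤ) < (q j : ℤ) := Int.emod_lt_of_pos _ h0
      omega⟩)

/-- The Floquet matrix `𝒟_V(z)` of `Δ + V` with boundary condition `u(n + q j e j) = z j u(n)`. -/
noncomputable def DVmat {d : ℕ} (q : Fin d → ℕ) (hq : ∀ j, 0 < q j)
    (V : (Fin d → ℤ) → ℝ) (z : Fin d → ℂ) :
    Matrix ((j : Fin d) → Fin (q j)) ((j : Fin d) → Fin (q j)) ℂ :=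
  Matrix.of fun n n' =>
    (∑ j, (extPer q hq z (Pi.single n' 1) (fun i => ((n i : ℕ) : ℤ) + if i = j then 1 else 0)
        + extPer q hq z (Pi.single n' 1) (fun i => ((n i : ℕ) : ℤ) - if i = j then 1 else 0)))
    + (V (fun i => ((n i : ℕ) : ℤ)) : ℂ) * (if n = n' then (1:ℂ) else 0)

/-- `𝒫_V(z, λ) = det (𝒟_V(z) - λ I)`. -/
noncomputable def PVfun {d : ℕ} (q : Fin d → ℕ) (hq : ∀ j, 0 < q j)
    (V : (Fin d → ℤ) → ℝ) (z : Fin d → ℂ) (lam : ℂ) : ℂ :=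
  Matrix.det (DVmat q hq V z - lam • (1 : Matrix _ _ ℂ))

/-- Discrete Fourier transform of the periodic potential `V`. -/
noncomputable def Vhat {d : ℕ} (q : Fin d → ℕ) (V : (Fin d → ℤ) → ℝ) (m : Fin d → ℤ) : ℂ :=
  (((∏ j, q j : ℕ) : ℂ))⁻¹ * ∑ n : ((j : Fin d) → Fin (q j)),
    (V (fun i => ((n i : ℕ) : ℤ)) : ℂ) *
      Complex.exp (-(2 * (Real.pi : ℂ) * Complex.I) *
        ∑ j, (m j : ℂ) * ((n j : ℕ) : ℂ) / ((q j : ℕ) : ℂ))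

/-- The diagonal matrix `B₀(z)` with entries `∑ j (ρ^j_{n j} z j + (ρ^j_{n j} z j)⁻¹)`. -/
noncomputable def B0mat {d : ℕ} (q : Fin d → ℕ) (z : Fin d → ℂ) :
    Matrix ((j : Fin d) → Fin (q j)) ((j : Fin d) → Fin (q j)) ℂ :=
  Matrix.diagonal fun n => ∑ j,
    (Complex.exp (2 * (Real.pi : ℂ) * Complex.I * ((n j : ℕ) : ℂ) / ((q j : ℕ) : ℂ)) * z j
      + (Complex.exp (2 * (Real.pi : ℂ) * Complex.I * ((n j : ℕ) : ℂ) / ((q j : ℕ) : ℂ)) * z j)⁻¹)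

/-- The matrix `B_V` with entries `V̂(n - n')`. -/
noncomputable def BVmat {d : ℕ} (q : Fin d → ℕ) (V : (Fin d → ℤ) → ℝ) :
    Matrix ((j : Fin d) → Fin (q j)) ((j : Fin d) → Fin (q j)) ℂ :=
  Matrix.of fun n n' => Vhat q V (fun i => ((n i : ℕ) : ℤ) - ((n' i : ℕ) : ℤ))

/-- `h(z, λ) = ∏_{n ∈ W} ((∑ j ρ^j_{n j} z j) - λ)` as a function. -/
noncomputable def hFun {d : ℕ} (q : Fin d → ℕ) (z : Fin d → ℂ) (lam : ℂ) : ℂ :=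
  ∏ n : ((j : Fin d) → Fin (q j)),
    ((∑ j, Complex.exp (2 * (Real.pi : ℂ) * Complex.I * ((n j : ℕ) : ℂ) / ((q j : ℕ) : ℂ)) * z j)
      - lam)

/-- The Laurent monomial `c * z j`. -/
noncomputable def zVar {d : ℕ} (j : Fin d) (c : ℂ) : MvL d :=
  AddMonoidAlgebra.ofCoeff (Finsupp.single (Finsupp.single j (1:ℤ)) c)

/-- `h(z, λ)` as a Laurent polynomial in `z` and polynomial in `λ`. -/
noncomputable def hPoly {d : ℕ} (q : Fin d → ℕ) : Polynomial (MvL d) :=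
  ∏ n : ((j : Fin d) → Fin (q j)),
    (Polynomial.C (∑ j, zVar j
        (Complex.exp (2 * (Real.pi : ℂ) * Complex.I * ((n j : ℕ) : ℂ) / ((q j : ℕ) : ℂ))))
      - Polynomial.X)



end


section AuxStatement2

open MeasureTheory Set Polynomial

/-- Zero set of a not-identically-zero analytic function on `ℝ` is countable. -/
lemma countable_zero_set_1d' (f : ℝ → ℂ) (hf : AnalyticOnNhd ℝ f Set.univ)
    (h : ∃ x, f x ≠ 0) : Set.Countable {x : ℝ | f x = 0} := by
  have hco : {x : ℝ | f x ≠ 0} ∈ Filter.codiscrete ℝ := by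
    rcases hf.eqOn_zero_or_eventually_ne_zero_of_preconnected isPreconnected_univ with H | H
    · obtain ⟨x, hx⟩ := h
      exact absurd (H (Set.mem_univ x)) hx
    · exact H
  rw [mem_codiscrete] at hco
  have hZ : ∀ x : ℝ, Disjoint (nhdsWithin x {x}ᶜ) (Filter.principal {x : ℝ | f x = 0}) := by
    intro x
    have := hco x
    have e : {x : ℝ | f x = 0} = {x | f x ≠ 0}ᶜ := by ext y; simp
    rw [e]; exact this
  have hcd : IsClosed {x : ℝ | f x = 0} ∧ DiscreteTopology {x : ℝ | f x = 0} :=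
    ⟨(isClosed_and_discrete_iff.2 hZ).1, isDiscrete_iff_discreteTopology.1 (isClosed_and_discrete_iff.2 hZ).2⟩
  haveI := hcd.2
  have : Countable {x : ℝ | f x = 0} :=
    TopologicalSpace.separableSpace_iff_countable.mp inferInstance
  exact Set.countable_coe_iff.mp this

/-- The continuous linear map `y ↦ Fin.cons 0 y`. -/
noncomputable def consCLM (d : ℕ) : (Fin d → ℝ) →L[ℝ] (Fin (d+1) → ℝ) :=
  ContinuousLinearMap.pi (fun i => Fin.cases 0 (fun j => ContinuousLinearMap.proj j) i)

lemma cons_eq_add {d : ℕ} (x : ℝ) (y : Fin d → ℝ) :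
    (Fin.cons x y : Fin (d+1) → ℝ) = Fin.cons x (0 : Fin d → ℝ) + consCLM d y := by
  funext i
  induction i using Fin.cases <;> simp [consCLM]

/-- The continuous linear map `x ↦ Fin.cons x 0`. -/
noncomputable def consCLM' (d : ℕ) : ℝ →L[ℝ] (Fin (d+1) → ℝ) :=
  ContinuousLinearMap.pi (fun i => Fin.cases (ContinuousLinearMap.id ℝ ℝ) (fun _ => 0) i)

lemma cons_eq_add' {d : ℕ} (x : ℝ) (y : Fin d → ℝ) :
    (Fin.cons x y : Fin (d+1) → ℝ) = consCLM' d x + Fin.cons 0 y := by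
  funext i
  induction i using Fin.cases <;> simp [consCLM']

/-- Zero set of a not-identically-zero analytic function on `ℝ^d` is Lebesgue-null. -/
lemma analytic_zero_set_null : ∀ (d : ℕ) (f : (Fin d → ℝ) → ℂ),
    AnalyticOnNhd ℝ f Set.univ → (∃ x, f x ≠ 0) → volume {x | f x = 0} = 0 := by
  intro d
  induction d with
  | zero =>
      intro f hf ⟨x₀, hx₀⟩
      have : {x : Fin 0 → ℝ | f x = 0} = ∅ := by
        ext x
        simp [Subsingleton.elim x x₀, hx₀]
      simp [this]
  | succ d IH =>
      intro f hf ⟨x₀, hx₀⟩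
      have hcont : Continuous f := by
        rw [continuous_iff_continuousAt]
        exact fun x => (hf x (mem_univ x)).continuousAt
      have hZc : IsClosed {x : Fin (d+1) → ℝ | f x = 0} := isClosed_eq hcont continuous_const
      set e := MeasurableEquiv.piFinSuccAbove (fun _ : Fin (d+1) => ℝ) 0 with he
      have hmp : MeasurePreserving e volume volume :=
        volume_preserving_piFinSuccAbove (fun _ : Fin (d+1) => ℝ) 0
      set Z : Set (Fin (d+1) → ℝ) := {x | f x = 0} with hZdef
      have hsymm : ∀ p : ℝ × (Fin d → ℝ), e.symm p = Fin.cons p.1 p.2 := by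
        intro p
        show (Fin.insertNthEquiv (fun _ : Fin (d+1) => ℝ) 0) p = _
        simp [Fin.insertNthEquiv_zero, Fin.consEquiv]
      have hmsymm : MeasurableSet (e.symm ⁻¹' Z) :=
        e.symm.measurable hZc.measurableSet
      have key : volume (e.symm ⁻¹' Z) = 0 := by
        rw [MeasureTheory.Measure.volume_eq_prod, MeasureTheory.Measure.measure_prod_null hmsymm]
        have h1 : ∀ x : ℝ, (∃ y, f (Fin.cons x y) ≠ 0) →
            volume {y : Fin d → ℝ | f (Fin.cons x y) = 0} = 0 := by
          intro x hx
          apply IH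
          · intro y _
            have h2 : AnalyticAt ℝ
                (fun y : Fin d → ℝ => (Fin.cons x 0 : Fin (d+1) → ℝ) + consCLM d y) y :=
              analyticAt_const.add ((consCLM d).analyticAt y)
            have h3 := (hf _ (mem_univ _)).comp h2
            apply h3.congr
            filter_upwards with y'
            simp [← cons_eq_add]
          · exact hx
        set y₀ : Fin d → ℝ := fun j => x₀ j.succ with hy₀
        set x₀' : ℝ := x₀ 0 with hx₀'
        have hx0eq : (Fin.cons x₀' y₀ : Fin (d+1) → ℝ) = x₀ := by
          funext i
          induction i using Fin.cases <;> simp [hy₀, hx₀']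
        have hg : AnalyticOnNhd ℝ (fun x : ℝ => f (Fin.cons x y₀)) Set.univ := by
          intro x _
          have h1 : AnalyticAt ℝ
              (fun x : ℝ => consCLM' d x + (Fin.cons 0 y₀ : Fin (d+1) → ℝ)) x :=
            ((consCLM' d).analyticAt x).add analyticAt_const
          have h2 := (hf _ (mem_univ _)).comp h1
          apply h2.congr
          filter_upwards with x'
          simp [← cons_eq_add']
        have hN : volume {x : ℝ | f (Fin.cons x y₀) = 0} = 0 := by
          refine Set.Countable.measure_zero ?_ _
          exact countable_zero_set_1d' _ hg ⟨x₀', by rw [hx0eq]; exact hx₀⟩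
        rw [← MeasureTheory.compl_mem_ae_iff] at hN
        filter_upwards [hN] with x hx
        have hslice : Prod.mk x ⁻¹' (e.symm ⁻¹' Z) = {y : Fin d → ℝ | f (Fin.cons x y) = 0} := by
          ext y
          simp [Z, hsymm]
        rw [hslice]
        exact h1 x ⟨y₀, by simpa using hx⟩
      have hfin : volume Z = volume (e.symm ⁻¹' Z) := by
        rw [← hmp.measure_preimage hmsymm.nullMeasurableSet]
        congr 1
        ext x
        simp
      rw [hfin, key]

variable {E : Type*} [NormedAddCommGroup E] [NormedSpace ℝ E]

/-- det of an entrywise-analytic matrix function is analytic. -/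
lemma det_analytic {Q : ℕ} (M : E → Matrix (Fin Q) (Fin Q) ℂ)
    (hM : ∀ i j, AnalyticOnNhd ℝ (fun k => M k i j) Set.univ) :
    AnalyticOnNhd ℝ (fun k => (M k).det) Set.univ := by
  have h : (fun k => (M k).det) =
      fun k => ∑ σ : Equiv.Perm (Fin Q), (((Equiv.Perm.sign σ : ℤ) : ℂ)) * ∏ i, M k (σ i) i := by
    funext k
    rw [Matrix.det_apply']
  rw [h]
  refine Finset.analyticOnNhd_fun_sum _ (fun σ _ => ?_)
  exact analyticOnNhd_const.mul (Finset.analyticOnNhd_fun_prod _ (fun i _ => hM (σ i) i))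

lemma mul_entry_analytic {Q : ℕ} (M N : E → Matrix (Fin Q) (Fin Q) ℂ)
    (hM : ∀ i j, AnalyticOnNhd ℝ (fun k => M k i j) Set.univ)
    (hN : ∀ i j, AnalyticOnNhd ℝ (fun k => N k i j) Set.univ) (i j : Fin Q) :
    AnalyticOnNhd ℝ (fun k => (M k * N k) i j) Set.univ := by
  have h : (fun k => (M k * N k) i j) = fun k => ∑ l, M k i l * N k l j := by
    funext k; rw [Matrix.mul_apply]
  rw [h]
  exact Finset.analyticOnNhd_fun_sum _ (fun l _ => (hM i l).mul (hN l j))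

lemma pow_entry_analytic {Q : ℕ} (M : E → Matrix (Fin Q) (Fin Q) ℂ)
    (hM : ∀ i j, AnalyticOnNhd ℝ (fun k => M k i j) Set.univ) (m : ℕ) (i j : Fin Q) :
    AnalyticOnNhd ℝ (fun k => ((M k) ^ m) i j) Set.univ := by
  induction m generalizing i j with
  | zero =>
      simp only [pow_zero]
      by_cases h : i = j <;> simp [Matrix.one_apply, h, analyticOnNhd_const]
  | succ m IH =>
      have h : (fun k => ((M k) ^ (m+1)) i j) = fun k => ((M k ^ m) * (M k)) i j := by
        funext k; rw [pow_succ]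
      rw [h]
      exact mul_entry_analytic _ _ IH hM i j

/-- `eval x (charpoly M) = det (x • 1 - M)`. -/
lemma eval_charpoly' {Q : ℕ} (M : Matrix (Fin Q) (Fin Q) ℂ) (x : ℂ) :
    (M.charpoly).eval x = (x • (1 : Matrix (Fin Q) (Fin Q) ℂ) - M).det := by
  rw [Matrix.charpoly, ← Polynomial.coe_evalRingHom, RingHom.map_det]
  congr 1
  ext i j
  by_cases h : i = j
  · subst h
    simp [Matrix.charmatrix_apply_eq, Matrix.smul_apply, Matrix.one_apply]
  · simp [Matrix.charmatrix_apply_ne _ _ _ h, Matrix.smul_apply, Matrix.one_apply, h]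

lemma eval_charpoly_analytic {Q : ℕ} (M : E → Matrix (Fin Q) (Fin Q) ℂ)
    (hM : ∀ i j, AnalyticOnNhd ℝ (fun k => M k i j) Set.univ) (x : ℂ) :
    AnalyticOnNhd ℝ (fun k => ((M k).charpoly).eval x) Set.univ := by
  have h : (fun k => ((M k).charpoly).eval x)
      = fun k => (x • (1 : Matrix (Fin Q) (Fin Q) ℂ) - M k).det := by
    funext k; rw [eval_charpoly']
  rw [h]
  apply det_analytic
  intro i j
  have h2 : (fun k => (x • (1 : Matrix (Fin Q) (Fin Q) ℂ) - M k) i j)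
      = fun k => x • (1 : Matrix (Fin Q) (Fin Q) ℂ) i j - M k i j := by
    funext k; rfl
  rw [h2]
  exact analyticOnNhd_const.sub (hM i j)

/-- Coefficients of the charpoly of an analytic matrix family are analytic (via Lagrange). -/
lemma coeff_charpoly_analytic {Q : ℕ} (M : E → Matrix (Fin Q) (Fin Q) ℂ)
    (hM : ∀ i j, AnalyticOnNhd ℝ (fun k => M k i j) Set.univ) (m : ℕ) :
    AnalyticOnNhd ℝ (fun k => ((M k).charpoly).coeff m) Set.univ := by
  set v : Fin (Q+1) → ℂ := fun i => (i : ℕ) with hv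
  have hvs : Set.InjOn v (Finset.univ : Finset (Fin (Q+1))) := by
    intro a _ b _ hab
    have h : ((a : ℕ) : ℂ) = ((b : ℕ) : ℂ) := hab
    exact Fin.val_injective (Nat.cast_injective h)
  have hrw : ∀ k, ((M k).charpoly).coeff m
      = ∑ i : Fin (Q+1), ((M k).charpoly).eval (v i)
          * ((Lagrange.basis Finset.univ v i).coeff m) := by
    intro k
    have hdeg : ((M k).charpoly).degree < (Finset.univ : Finset (Fin (Q+1))).card := by
      rw [Matrix.charpoly_degree_eq_dim]
      norm_num [Finset.card_univ]
      exact_mod_cast Nat.lt_succ_self Q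
    conv_lhs => rw [Lagrange.eq_interpolate hvs hdeg]
    rw [Lagrange.interpolate_apply, Polynomial.finset_sum_coeff]
    exact Finset.sum_congr rfl (fun i _ => by rw [Polynomial.coeff_C_mul])
  have h : (fun k => ((M k).charpoly).coeff m)
      = fun k => ∑ i : Fin (Q+1), ((M k).charpoly).eval (v i)
          * ((Lagrange.basis Finset.univ v i).coeff m) := by
    funext k; exact hrw k
  rw [h]
  exact Finset.analyticOnNhd_fun_sum _
    (fun i _ => (eval_charpoly_analytic M hM (v i)).mul analyticOnNhd_const)

lemma exp_mul_proj_analytic {d : ℕ} (c : ℂ) (j' : Fin d) :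
    AnalyticOnNhd ℝ (fun k : Fin d → ℝ => Complex.exp (c * ((k j' : ℝ) : ℂ))) Set.univ := by
  intro k _
  have h0 : AnalyticAt ℝ (fun k : Fin d → ℝ => ((k j' : ℝ) : ℂ)) k :=
    (Complex.ofRealCLM.comp
      (ContinuousLinearMap.proj (R := ℝ) (φ := fun _ : Fin d => ℝ) j')).analyticAt k
  exact (analyticAt_cexp.restrictScalars).comp (analyticAt_const.mul h0)

lemma evalMvL_exp_analytic {d : ℕ} (p : MvL d) :
    AnalyticOnNhd ℝ (fun k : Fin d → ℝ =>
      evalMvL (fun j' => Complex.exp (2 * (Real.pi : ℂ) * Complex.I * (k j' : ℂ))) p)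
      Set.univ := by
  have heq : (fun k : Fin d → ℝ =>
      evalMvL (fun j' => Complex.exp (2 * (Real.pi : ℂ) * Complex.I * (k j' : ℂ))) p)
      = fun k => ∑ n ∈ p.coeff.support, p.coeff n *
          ∏ j', Complex.exp ((((n j' : ℤ) : ℂ) * (2 * (Real.pi : ℂ) * Complex.I))
            * ((k j' : ℝ) : ℂ)) := by
    funext k
    rw [evalMvL, Finsupp.sum]
    refine Finset.sum_congr rfl (fun n _ => ?_)
    congr 1
    refine Finset.prod_congr rfl (fun j' _ => ?_)
    rw [← Complex.exp_int_mul]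
    congr 1
    ring
  rw [heq]
  refine Finset.analyticOnNhd_fun_sum _ (fun n _ => ?_)
  exact analyticOnNhd_const.mul
    (Finset.analyticOnNhd_fun_prod _ (fun j' _ => exp_mul_proj_analytic _ j'))

lemma shift_analytic {d : ℕ} {f : (Fin d → ℝ) → ℂ} (hf : AnalyticOnNhd ℝ f Set.univ)
    (α : Fin d → ℝ) : AnalyticOnNhd ℝ (fun k => f (k + α)) Set.univ := by
  intro k _
  have h1 : AnalyticAt ℝ (fun k : Fin d → ℝ => k + α) k :=
    ((ContinuousLinearMap.id ℝ (Fin d → ℝ)).analyticAt k).add analyticAt_const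
  exact (hf _ (mem_univ _)).comp h1

lemma det_sub_smul_eq {Q : ℕ} (M : Matrix (Fin Q) (Fin Q) ℂ) (dd : Fin Q → ℂ)
    (h : M.charpoly = ∏ w, (X - C (dd w))) (c : ℂ) :
    (M - c • (1 : Matrix (Fin Q) (Fin Q) ℂ)).det = ∏ w, (dd w - c) := by
  have h1 : (c • (1 : Matrix (Fin Q) (Fin Q) ℂ) - M).det = ∏ w, (c - dd w) := by
    rw [← eval_charpoly', h]
    simp [Polynomial.eval_prod]
  have h2 : M - c • (1 : Matrix (Fin Q) (Fin Q) ℂ)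
      = -(c • (1 : Matrix (Fin Q) (Fin Q) ℂ) - M) := (neg_sub _ _).symm
  rw [h2, Matrix.det_neg, h1, Fintype.card_fin]
  rw [show ((-1 : ℂ)) ^ Q = ∏ _w : Fin Q, (-1 : ℂ) by simp, ← Finset.prod_mul_distrib]
  exact Finset.prod_congr rfl (fun w _ => by ring)

end AuxStatement2

theorem statement2
    {d Q : ℕ} (hd : 0 < d) (hQ : 0 < Q)
    (𝒜 : Matrix (Fin Q) (Fin Q) (MvL d))
    (A : (Fin d → ℝ) → Matrix (Fin Q) (Fin Q) ℂ)
    (hA : ∀ k i j, A k i j =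
      evalMvL (fun j' => Complex.exp (2 * (Real.pi : ℂ) * Complex.I * (k j' : ℂ))) (𝒜 i j))
    (hHerm : ∀ k, (A k).IsHermitian)
    (μ : Fin Q → (Fin d → ℝ) → ℝ)
    (hmono : ∀ k, Monotone fun s => μ s k)
    (heig : ∀ k, (A k).charpoly = ∏ s, (Polynomial.X - Polynomial.C ((μ s k : ℝ) : ℂ)))
    (α : Fin d → ℝ) :
    {k : Fin d → ℝ | ∃ s w : Fin Q, μ s (k + α) = μ w k} = Set.univ ∨
      volume {k : Fin d → ℝ | ∃ s w : Fin Q, μ s (k + α) = μ w k} = 0 := by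
  classical
  by_cases hall : ∀ k : Fin d → ℝ, ∃ s w : Fin Q, μ s (k + α) = μ w k
  · left
    exact Set.eq_univ_of_forall (fun k => hall k)
  · right
    push_neg at hall
    obtain ⟨k₀, hk₀⟩ := hall
    set F : (Fin d → ℝ) → ℂ :=
      fun k => (Polynomial.aeval (A k) ((A (k + α)).charpoly)).det with hF
    have hFval : ∀ k, F k
        = ∏ s, ∏ w, (((μ w k : ℝ) : ℂ) - ((μ s (k + α) : ℝ) : ℂ)) := by
      intro k
      have h0 : F k = ∏ s, (Polynomial.aeval (A k)
          (Polynomial.X - Polynomial.C ((μ s (k + α) : ℝ) : ℂ))).det := by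
        rw [hF]
        simp only
        rw [heig (k + α)]
        have := map_prod
          (Matrix.detMonoidHom.comp ((Polynomial.aeval (R := ℂ) (A k)).toRingHom.toMonoidHom))
          (fun s : Fin Q => Polynomial.X - Polynomial.C ((μ s (k + α) : ℝ) : ℂ)) Finset.univ
        exact this
      rw [h0]
      refine Finset.prod_congr rfl (fun s _ => ?_)
      have h1 : (Polynomial.aeval (A k))
            (Polynomial.X - Polynomial.C ((μ s (k + α) : ℝ) : ℂ))
          = A k - ((μ s (k + α) : ℝ) : ℂ) • (1 : Matrix (Fin Q) (Fin Q) ℂ) := by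
        rw [map_sub, Polynomial.aeval_X, Polynomial.aeval_C, Algebra.algebraMap_eq_smul_one]
      rw [h1]
      exact det_sub_smul_eq (A k) (fun w => ((μ w k : ℝ) : ℂ)) (heig k) _
    have hzero : ∀ k, (F k = 0 ↔ ∃ s w : Fin Q, μ s (k + α) = μ w k) := by
      intro k
      rw [hFval k, Finset.prod_eq_zero_iff]
      constructor
      · rintro ⟨s, -, hs⟩
        rw [Finset.prod_eq_zero_iff] at hs
        obtain ⟨w, -, hw⟩ := hs
        rw [sub_eq_zero] at hw
        exact ⟨s, w, (Complex.ofReal_inj.mp hw).symm⟩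
      · rintro ⟨s, w, hsw⟩
        refine ⟨s, Finset.mem_univ s, Finset.prod_eq_zero (Finset.mem_univ w) ?_⟩
        rw [sub_eq_zero, hsw]
    have hset : {k : Fin d → ℝ | ∃ s w : Fin Q, μ s (k + α) = μ w k} = {k | F k = 0} := by
      ext k
      exact (hzero k).symm
    rw [hset]
    have hent : ∀ i j, AnalyticOnNhd ℝ (fun k => A k i j) Set.univ := by
      intro i j
      have h : (fun k => A k i j) = fun k => evalMvL
          (fun j' => Complex.exp (2 * (Real.pi : ℂ) * Complex.I * (k j' : ℂ))) (𝒜 i j) :=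
        funext (fun k => hA k i j)
      rw [h]
      exact evalMvL_exp_analytic _
    have hshift : ∀ i j, AnalyticOnNhd ℝ (fun k => A (k + α) i j) Set.univ :=
      fun i j => shift_analytic (hent i j) α
    have hFanalytic : AnalyticOnNhd ℝ F Set.univ := by
      apply det_analytic
      intro i j
      have hQlt : ∀ k : Fin d → ℝ, ((A (k + α)).charpoly).natDegree < Q + 1 := by
        intro k
        rw [Matrix.charpoly_natDegree_eq_dim, Fintype.card_fin]
        omega
      have h : (fun k => (Polynomial.aeval (A k) ((A (k + α)).charpoly)) i j)
          = fun k => ∑ m ∈ Finset.range (Q + 1),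
              ((A (k + α)).charpoly).coeff m * (((A k) ^ m) i j) := by
        funext k
        rw [Polynomial.aeval_eq_sum_range' (hQlt k), Matrix.sum_apply]
        exact Finset.sum_congr rfl (fun m _ => by rw [Matrix.smul_apply, smul_eq_mul])
      rw [h]
      refine Finset.analyticOnNhd_fun_sum _ (fun m _ => ?_)
      exact (coeff_charpoly_analytic _ hshift m).mul (pow_entry_analytic _ hent m i j)
    refine analytic_zero_set_null d F hFanalytic ⟨k₀, fun h => ?_⟩
    obtain ⟨s, w, hsw⟩ := (hzero k₀).1 h
    exact hk₀ s w hsw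
end

section
/- For any complex number a ≠ 0 and any ζ = (ζ_1,…,ζ_d) ∈ ℂ^d with |ζ_j| = 1 for j = 1,…,d, one has 𝒫_𝒜(z,λ) ≢ 𝒫_𝒜(ζ⊙z, λ+a); i.e., det(𝒜(z) − λI) and det(𝒜(ζ⊙z) − (λ+a)I) are distinct as Laurent polynomials in z and polynomials in λ. -/
open MeasureTheory Polynomial

noncomputable def torusChar {d : ℕ} (z : Fin d → ℂ) (hz : ∀ j, z j ≠ 0) :
    Multiplicative (Fin d →₀ ℤ) →* ℂ where
  toFun := fun n => ∏ j, z j ^ ((Multiplicative.toAdd n) j)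
  map_one' := by
    show ∏ j, z j ^ ((Multiplicative.toAdd (1 : Multiplicative (Fin d →₀ ℤ))) j) = 1
    simp
  map_mul' := by
    intro m n
    show ∏ j, z j ^ ((Multiplicative.toAdd (m * n)) j) = _
    rw [← Finset.prod_mul_distrib]
    refine Finset.prod_congr rfl fun j _ => ?_
    have : (Multiplicative.toAdd (m * n)) j
        = (Multiplicative.toAdd m) j + (Multiplicative.toAdd n) j := rfl
    rw [this, zpow_add₀ (hz j)]

noncomputable def evalRH {d : ℕ} (z : Fin d → ℂ) (hz : ∀ j, z j ≠ 0) : MvL d →+* ℂ :=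
  ((AddMonoidAlgebra.lift ℂ ℂ (Fin d →₀ ℤ)) (torusChar z hz)).toRingHom

lemma evalMvL_eq {d : ℕ} (z : Fin d → ℂ) (hz : ∀ j, z j ≠ 0) (p : MvL d) :
    evalMvL z p = evalRH z hz p := by
  have h1 : evalRH z hz p = ((AddMonoidAlgebra.lift ℂ ℂ (Fin d →₀ ℤ)) (torusChar z hz)) p := rfl
  rw [h1, AddMonoidAlgebra.lift_apply, evalMvL]
  refine Finsupp.sum_congr fun n _ => ?_
  rw [smul_eq_mul]
  rfl

lemma evalP_eq {d : ℕ} (z : Fin d → ℂ) (hz : ∀ j, z j ≠ 0) (lam : ℂ) (P : Polynomial (MvL d)) :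
    evalP z lam P = Polynomial.eval₂ (evalRH z hz) lam P := by
  rw [eval₂_eq_sum, evalP]
  unfold Polynomial.sum
  exact Finset.sum_congr rfl fun m _ => by simp only []; rw [evalMvL_eq z hz]

lemma map_detP {d Q : ℕ} (M : Matrix (Fin Q) (Fin Q) (MvL d)) (z : Fin d → ℂ) (hz : ∀ j, z j ≠ 0) :
    Polynomial.map (evalRH z hz) (detP M)
      = Polynomial.C ((-1:ℂ)^Q) * Matrix.charpoly (M.map (evalRH z hz)) := by
  have h0 : Polynomial.map (evalRH z hz) (detP M)
      = (Polynomial.mapRingHom (evalRH z hz)) (detP M) := rfl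
  rw [h0, detP, RingHom.map_det]
  have h1 : (Polynomial.mapRingHom (evalRH z hz)).mapMatrix
        (Matrix.of fun i j => Polynomial.C (M i j) - if i = j then Polynomial.X else 0)
      = -(Matrix.charmatrix (M.map (evalRH z hz))) := by
    ext i j
    by_cases h : i = j
    · subst h
      simp [Matrix.charmatrix_apply_eq, Matrix.map_apply]
    · simp [h, Matrix.charmatrix_apply_ne _ _ _ h, Matrix.map_apply]
  rw [h1, Matrix.det_neg, Matrix.charpoly]
  simp [Fintype.card_fin, map_pow]

lemma coeff_comp_shift {Q : ℕ} (hQ : 0 < Q) (P : Polynomial ℂ) (hm : P.Monic)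
    (hdeg : P.natDegree = Q) (a : ℂ) :
    (P.comp (Polynomial.X + Polynomial.C a)).coeff (Q-1) = P.coeff (Q-1) + Q * a := by
  rw [← taylor_apply, taylor_coeff]
  have hlt : ((hasseDeriv (Q-1)) P).natDegree < 2 :=
    lt_of_le_of_lt (natDegree_hasseDeriv_le P (Q-1)) (by omega)
  rw [eval_eq_sum_range' hlt, Finset.sum_range_succ, Finset.sum_range_one,
    hasseDeriv_coeff, hasseDeriv_coeff]
  have h1 : 1 + (Q-1) = Q := by omega
  have h2 : 0 + (Q-1) = Q - 1 := by omega
  rw [h1, h2, Nat.choose_self]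
  have h3 : Q.choose (Q-1) = Q := by
    have : Q - 1 = Q - 1 := rfl
    calc Q.choose (Q-1) = Q.choose 1 := by
          have := Nat.choose_symm (n := Q) (k := 1) (by omega)
          simpa using this
      _ = Q := Nat.choose_one_right Q
  have h4 : P.coeff Q = 1 := by rw [← hdeg]; exact hm.coeff_natDegree
  rw [h3, h4]
  push_cast
  ring

lemma abs_evalMvL_le {d : ℕ} (z : Fin d → ℂ) (hz1 : ∀ j, ‖z j‖ = 1) (p : MvL d) :
    ‖evalMvL z p‖ ≤ ∑ n ∈ p.coeff.support, ‖p.coeff n‖ := by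
  rw [evalMvL, Finsupp.sum]
  refine le_trans (norm_sum_le _ _) (Finset.sum_le_sum fun n _ => ?_)
  rw [norm_mul]
  have h : ‖∏ j, z j ^ (n j)‖ = 1 := by
    rw [norm_prod]
    refine Finset.prod_eq_one fun j _ => ?_
    rw [norm_zpow, hz1 j, one_zpow]
  rw [h, mul_one]


theorem statement8
    {d Q : ℕ} (hd : 0 < d) (hQ : 0 < Q)
    (𝒜 : Matrix (Fin Q) (Fin Q) (MvL d))
    (a : ℂ) (ha : a ≠ 0)
    (ζ : Fin d → ℂ) (hζ : ∀ j, ‖ζ j‖ = 1) :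
    ∃ (z : Fin d → ℂ) (lam : ℂ), (∀ j, z j ≠ 0) ∧
      evalP z lam (detP 𝒜) ≠ evalP (fun j => ζ j * z j) (lam + a) (detP 𝒜) := by
  by_contra hcon
  push_neg at hcon
  haveI : Nonempty (Fin Q) := ⟨⟨0, hQ⟩⟩
  have hζ0 : ∀ j, ζ j ≠ 0 := by
    intro j h
    have := hζ j
    rw [h] at this
    simp at this
  set w : ℕ → Fin d → ℂ := fun k j => ζ j ^ k with hw
  have hwz : ∀ k j, w k j ≠ 0 := fun k j => pow_ne_zero k (hζ0 j)
  set A : ℕ → Matrix (Fin Q) (Fin Q) ℂ := fun k => 𝒜.map (evalRH (w k) (hwz k)) with hA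
  set cp : ℕ → Polynomial ℂ := fun k => Matrix.charpoly (A k) with hcp
  have hmono : ∀ k, (cp k).Monic := fun k => Matrix.charpoly_monic _
  have hdeg : ∀ k, (cp k).natDegree = Q := fun k => by
    rw [hcp]
    rw [Matrix.charpoly_natDegree_eq_dim, Fintype.card_fin]
  have hPk : ∀ k, Polynomial.map (evalRH (w k) (hwz k)) (detP 𝒜)
      = (Polynomial.map (evalRH (w (k+1)) (hwz (k+1))) (detP 𝒜)).comp
          (Polynomial.X + Polynomial.C a) := by
    intro k
    apply Polynomial.funext
    intro lam
    rw [eval_comp]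
    simp only [eval_add, eval_X, eval_C]
    rw [← eval₂_eq_eval_map, ← eval₂_eq_eval_map,
      ← evalP_eq _ (hwz k), ← evalP_eq _ (hwz (k+1))]
    have hfun : (fun j => ζ j * w k j) = w (k+1) := by
      funext j
      rw [hw]
      simp [pow_succ']
    rw [← hfun]
    exact hcon (w k) lam (hwz k)
  have hC : (Polynomial.C ((-1:ℂ)^Q)) ≠ 0 := by
    simp [Polynomial.C_eq_zero]
  have hc : ∀ k, cp k = (cp (k+1)).comp (Polynomial.X + Polynomial.C a) := by
    intro k
    have h := hPk k
    rw [map_detP 𝒜 (w k) (hwz k), map_detP 𝒜 (w (k+1)) (hwz (k+1)), mul_comp, C_comp] at h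
    exact mul_left_cancel₀ hC h
  have hcoeff : ∀ k, (cp k).coeff (Q-1) = (cp (k+1)).coeff (Q-1) + Q * a := by
    intro k
    rw [hc k]
    exact coeff_comp_shift hQ _ (hmono _) (hdeg _) a
  have hiter : ∀ k, (cp 0).coeff (Q-1) = (cp k).coeff (Q-1) + (k:ℂ) * ((Q:ℂ) * a) := by
    intro k
    induction k with
    | zero => simp
    | succ n ih =>
        rw [ih, hcoeff n]
        push_cast
        ring
  set B : ℝ := ∑ i, ∑ n ∈ (𝒜 i i).coeff.support, ‖(𝒜 i i).coeff n‖ with hB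
  have habs : ∀ k, ‖(cp k).coeff (Q-1)‖ ≤ B := by
    intro k
    have htr : (cp k).coeff (Q-1) = -(A k).trace := by
      have h := Matrix.trace_eq_neg_charpoly_coeff (A k)
      rw [Fintype.card_fin] at h
      rw [hcp]
      rw [h]
      ring
    rw [htr, norm_neg, Matrix.trace]
    refine le_trans (norm_sum_le _ _) (Finset.sum_le_sum fun i _ => ?_)
    have hdiag : Matrix.diag (A k) i = evalMvL (w k) (𝒜 i i) := by
      rw [evalMvL_eq _ (hwz k)]
      rfl
    rw [hdiag]
    refine abs_evalMvL_le _ (fun j => ?_) _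
    rw [hw]
    simp [map_pow, hζ j]
  have hQa : (0:ℝ) < Q * ‖a‖ := by
    have := norm_pos_iff.mpr ha
    positivity
  obtain ⟨k, hk⟩ := exists_nat_gt ((2*B) / (Q * ‖a‖))
  have hk' : 2*B < k * (Q * ‖a‖) := (div_lt_iff₀ hQa).mp hk
  have hdiff : ‖(k:ℂ) * ((Q:ℂ) * a)‖ ≤ 2*B := by
    have he : (k:ℂ) * ((Q:ℂ) * a) = (cp 0).coeff (Q-1) - (cp k).coeff (Q-1) := by
      rw [hiter k]; ring
    rw [he]
    calc ‖(cp 0).coeff (Q-1) - (cp k).coeff (Q-1)‖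
        ≤ ‖(cp 0).coeff (Q-1)‖ + ‖(cp k).coeff (Q-1)‖ := by
          simpa using norm_sub_le ((cp 0).coeff (Q-1)) ((cp k).coeff (Q-1))
      _ ≤ 2*B := by have := habs 0; have := habs k; linarith
  have heq : ‖(k:ℂ) * ((Q:ℂ) * a)‖ = k * (Q * ‖a‖) := by
    rw [norm_mul, norm_mul, Complex.norm_natCast, Complex.norm_natCast]
  rw [heq] at hdiff
  linarith
end

section
/- The spectral band functions of A(k) have no non-trivial periods if and only if both of the following hold: (i) for every α ∈ ℝ^d with α ≠ 0_d mod ℤ^d, the set S₁(α) = {k ∈ ℝ^d : ∃ s,w ∈ {1,…,Q} with λ_A^s(k+α) = λ_A^w(k)} has Lebesgue measure zero; and (ii) the set S₂ = {k ∈ ℝ^d : ∃ distinct s,w ∈ {1,…,Q} with λ_A^s(k) = λ_A^w(k)} has Lebesgue measure zero. -/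
open MeasureTheory Polynomial

lemma eq_of_prod_X_sub_C_eq {Q : ℕ} (a b : Fin Q → ℝ) (ha : Monotone a) (hb : Monotone b)
    (h : (∏ s, (X - C ((a s : ℝ) : ℂ))) = ∏ s, (X - C ((b s : ℝ) : ℂ))) : a = b := by
  have key : (Finset.univ.val.map fun s => ((a s : ℝ) : ℂ))
      = Finset.univ.val.map fun s => ((b s : ℝ) : ℂ) := by
    have h1 := Polynomial.roots_multiset_prod_X_sub_C
      (Finset.univ.val.map fun s : Fin Q => ((a s : ℝ) : ℂ))
    have h2 := Polynomial.roots_multiset_prod_X_sub_C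
      (Finset.univ.val.map fun s : Fin Q => ((b s : ℝ) : ℂ))
    rw [Multiset.map_map] at h1 h2
    have e1 : (∏ s, (X - C ((a s : ℝ) : ℂ)))
        = (Finset.univ.val.map fun s : Fin Q => X - C ((a s : ℝ) : ℂ)).prod := rfl
    have e2 : (∏ s, (X - C ((b s : ℝ) : ℂ)))
        = (Finset.univ.val.map fun s : Fin Q => X - C ((b s : ℝ) : ℂ)).prod := rfl
    rw [← h1, ← h2]
    simp only [Function.comp]
    rw [← e1, ← e2, h]
  have key2 : Finset.univ.val.map a = Finset.univ.val.map b := by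
    have : (Finset.univ.val.map a).map (Complex.ofReal)
        = (Finset.univ.val.map b).map (Complex.ofReal) := by
      rw [Multiset.map_map, Multiset.map_map]; exact key
    exact Multiset.map_injective Complex.ofReal_injective this
  have huniv : (Finset.univ.val : Multiset (Fin Q)) = ↑(List.finRange Q) := rfl
  rw [huniv] at key2
  have key3 : (List.ofFn a : Multiset ℝ) = (List.ofFn b : Multiset ℝ) := by
    rw [List.ofFn_eq_map, List.ofFn_eq_map]
    exact_mod_cast key2
  have hperm : (List.ofFn a).Perm (List.ofFn b) := Multiset.coe_eq_coe.mp key3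
  have := List.Perm.eq_of_sortedLE ha.sortedLE_ofFn hb.sortedLE_ofFn hperm
  funext s
  have := congrArg (fun l : List ℝ => l[(s : ℕ)]?) this
  simpa [List.getElem?_ofFn] using this

theorem statement9
    {d Q : ℕ} (hd : 0 < d) (hQ : 0 < Q)
    (𝒜 : Matrix (Fin Q) (Fin Q) (MvL d))
    (A : (Fin d → ℝ) → Matrix (Fin Q) (Fin Q) ℂ)
    (hA : ∀ k i j, A k i j =
      evalMvL (fun j' => Complex.exp (2 * (Real.pi : ℂ) * Complex.I * (k j' : ℂ))) (𝒜 i j))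
    (hHerm : ∀ k, (A k).IsHermitian)
    (μ : Fin Q → (Fin d → ℝ) → ℝ)
    (hmono : ∀ k, Monotone fun s => μ s k)
    (heig : ∀ k, (A k).charpoly = ∏ s, (Polynomial.X - Polynomial.C ((μ s k : ℝ) : ℂ)))
 :
    (∀ (α : Fin d → ℝ) (s w : Fin Q),
      0 < volume {k : Fin d → ℝ | μ s (k + α) = μ w k} →
      (∀ j, ∃ n : ℤ, α j = n) ∧ s = w)
      ↔ ((∀ α : Fin d → ℝ, (¬ ∀ j, ∃ n : ℤ, α j = n) →
            volume {k : Fin d → ℝ | ∃ s w : Fin Q, μ s (k + α) = μ w k} = 0)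
          ∧ volume {k : Fin d → ℝ | ∃ s w : Fin Q, s ≠ w ∧ μ s k = μ w k} = 0) := by
  constructor
  · intro H
    constructor
    · intro α hα
      have hsub : {k : Fin d → ℝ | ∃ s w : Fin Q, μ s (k + α) = μ w k}
          ⊆ ⋃ s : Fin Q, ⋃ w : Fin Q, {k : Fin d → ℝ | μ s (k + α) = μ w k} := by
        intro k hk
        obtain ⟨s, w, hsw⟩ := hk
        exact Set.mem_iUnion.mpr ⟨s, Set.mem_iUnion.mpr ⟨w, hsw⟩⟩
      refine measure_mono_null hsub ?_
      refine measure_iUnion_null fun s => measure_iUnion_null fun w => ?_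
      by_contra h
      exact hα (H α s w (pos_iff_ne_zero.mpr h)).1
    · have hsub : {k : Fin d → ℝ | ∃ s w : Fin Q, s ≠ w ∧ μ s k = μ w k}
          ⊆ ⋃ s : Fin Q, ⋃ w : Fin Q,
            {k : Fin d → ℝ | s ≠ w ∧ μ s (k + 0) = μ w k} := by
        intro k hk
        obtain ⟨s, w, hsw, hval⟩ := hk
        refine Set.mem_iUnion.mpr ⟨s, Set.mem_iUnion.mpr ⟨w, hsw, ?_⟩⟩
        simpa using hval
      refine measure_mono_null hsub ?_
      refine measure_iUnion_null fun s => measure_iUnion_null fun w => ?_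
      by_contra h
      rcases eq_or_ne s w with rfl | hsw
      · apply h
        have : {k : Fin d → ℝ | s ≠ s ∧ μ s (k + 0) = μ s k} = ∅ := by
          ext k; simp
        simp [this]
      · have hpos : 0 < volume {k : Fin d → ℝ | μ s (k + 0) = μ w k} := by
          refine lt_of_lt_of_le (pos_iff_ne_zero.mpr h) (measure_mono ?_)
          intro k hk; exact hk.2
        exact hsw (H 0 s w hpos).2
  · rintro ⟨h1, h2⟩ α s w hpos
    have hint : ∀ j, ∃ n : ℤ, α j = n := by
      by_contra hna
      apply hpos.ne'
      refine measure_mono_null ?_ (h1 α hna)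
      intro k hk
      exact ⟨s, w, hk⟩
    refine ⟨hint, ?_⟩
    have hper : ∀ k : Fin d → ℝ, ∀ t : Fin Q, μ t (k + α) = μ t k := by
      intro k t
      have hAk : A (k + α) = A k := by
        ext i j
        rw [hA, hA]
        congr 1
        funext j'
        obtain ⟨n, hn⟩ := hint j'
        have : ((k + α) j' : ℂ) = (k j' : ℂ) + (n : ℂ) := by
          simp [Pi.add_apply, hn]
        rw [this, mul_add, Complex.exp_add]
        have h2pi : (2 : ℂ) * (Real.pi : ℂ) * Complex.I * (n : ℂ)
            = (n : ℤ) * (2 * (Real.pi : ℂ) * Complex.I) := by push_cast; ring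
        rw [h2pi, Complex.exp_int_mul_two_pi_mul_I, mul_one]
      have hch : (∏ t, (Polynomial.X - Polynomial.C ((μ t (k + α) : ℝ) : ℂ)))
          = ∏ t, (Polynomial.X - Polynomial.C ((μ t k : ℝ) : ℂ)) := by
        rw [← heig (k + α), ← heig k, hAk]
      have := eq_of_prod_X_sub_C_eq (fun t => μ t (k + α)) (fun t => μ t k)
        (hmono (k + α)) (hmono k) hch
      exact congrFun this t
    by_contra hsw
    apply hpos.ne'
    refine measure_mono_null ?_ h2
    intro k hk
    exact ⟨s, w, hsw, (hper k s).symm.trans hk⟩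
end

section
/- Let P̃_V(z,λ) = 𝒫_V(z^q,λ), where z^q = (z_1^{q_1},…,z_d^{q_d}). Then for any ζ = (ζ_1,…,ζ_d) ∈ ℂ^d with |ζ_j| = 1 for j = 1,…,d and (ζ_1^{q_1},…,ζ_d^{q_d}) ≠ 1_d, one has P̃_V(z,λ) ≢ P̃_V(ζ⊙z,λ), where ζ⊙z = (ζ_1z_1,…,ζ_dz_d). -/
open MeasureTheory Polynomial

noncomputable section

namespace S14
variable {d : ℕ} (q : Fin d → ℕ) (hq : ∀ j, 0 < q j)

def fsucc (j : Fin d) (n : (i : Fin d) → Fin (q i)) : (i : Fin d) → Fin (q i) :=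
  Function.update n j ⟨((n j : ℕ) + 1) % q j, Nat.mod_lt _ (hq j)⟩

def fpred (j : Fin d) (n : (i : Fin d) → Fin (q i)) : (i : Fin d) → Fin (q i) :=
  Function.update n j ⟨((n j : ℕ) + (q j - 1)) % q j, Nat.mod_lt _ (hq j)⟩

lemma extPer_single_add (z : Fin d → ℂ) (n n' : (i : Fin d) → Fin (q i)) (j : Fin d) :
    extPer q hq z (Pi.single n' 1) (fun i => ((n i : ℕ) : ℤ) + if i = j then 1 else 0)
      = (if (n j : ℕ) + 1 = q j then z j else 1) * (if n' = fsucc q hq j n then 1 else 0) := by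
  unfold extPer
  have harg : (fun i => (⟨(((((n i : ℕ) : ℤ) + if i = j then 1 else 0)) % (q i : ℤ)).toNat, by
        have h0 : (0:ℤ) < (q i : ℤ) := by exact_mod_cast hq i
        have h1 := Int.emod_nonneg ((((n i : ℕ) : ℤ) + if i = j then 1 else 0)) h0.ne'
        have h2 := Int.emod_lt_of_pos ((((n i : ℕ) : ℤ) + if i = j then 1 else 0)) h0
        omega⟩ : Fin (q i))) = fsucc q hq j n := by
    funext i
    rcases eq_or_ne i j with rfl | hij
    · simp only [if_pos rfl, fsucc, Function.update_self]
      apply Fin.ext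
      simp only [if_true]
      have : (((n i : ℕ) : ℤ) + 1) % (q i : ℤ) = (((n i : ℕ) + 1 : ℕ) : ℤ) % ((q i : ℕ) : ℤ) := by
        push_cast; ring_nf
      rw [this, ← Int.natCast_mod, Int.toNat_natCast]
    · simp only [if_neg hij, fsucc, Function.update_of_ne hij, add_zero]
      apply Fin.ext
      simp only
      rw [Int.emod_eq_of_lt (by positivity) (by exact_mod_cast (n i).2)]
      simp
  rw [harg]
  have hprod : (∏ i, z i ^ ((((n i : ℕ) : ℤ) + if i = j then 1 else 0) / (q i : ℤ)))
      = (if (n j : ℕ) + 1 = q j then z j else 1) := by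
    rw [Finset.prod_eq_single j]
    · simp only [if_pos rfl, if_true]
      rcases eq_or_ne ((n j : ℕ) + 1) (q j) with h | h
      · rw [if_pos h]
        have : ((n j : ℕ) : ℤ) + 1 = (q j : ℤ) := by exact_mod_cast h
        rw [this, Int.ediv_self (by exact_mod_cast (hq j).ne')]
        simp
      · rw [if_neg h]
        have h2 : ((n j : ℕ) : ℤ) + 1 < (q j : ℤ) := by
          have := (n j).2; omega
        rw [Int.ediv_eq_zero_of_lt (by positivity) h2]
        simp
    · intro i _ hij
      rw [if_neg hij, add_zero,
        Int.ediv_eq_zero_of_lt (by positivity) (by exact_mod_cast (n i).2)]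
      simp
    · simp
  rw [hprod, Pi.single_apply]
  congr 1
  by_cases h : n' = fsucc q hq j n
  · rw [if_pos h.symm, if_pos h]
  · rw [if_neg (fun hh => h hh.symm), if_neg h]


lemma neg_one_facts (b : ℤ) (h : 0 < b) : (-1) / b = -1 ∧ (-1) % b = b - 1 :=
  (Int.ediv_emod_unique h).mpr ⟨by ring, by omega, by omega⟩

lemma extPer_single_sub (z : Fin d → ℂ) (n n' : (i : Fin d) → Fin (q i)) (j : Fin d) :
    extPer q hq z (Pi.single n' 1) (fun i => ((n i : ℕ) : ℤ) - if i = j then 1 else 0)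
      = (if (n j : ℕ) = 0 then (z j) ^ (-1 : ℤ) else 1)
        * (if n' = fpred q hq j n then 1 else 0) := by
  unfold extPer
  have hb : ∀ i : Fin d, (0:ℤ) < (q i : ℤ) := fun i => by exact_mod_cast hq i
  have harg : (fun i => (⟨(((((n i : ℕ) : ℤ) - if i = j then 1 else 0)) % (q i : ℤ)).toNat, by
        have h1 := Int.emod_nonneg ((((n i : ℕ) : ℤ) - if i = j then 1 else 0)) (hb i).ne'
        have h2 := Int.emod_lt_of_pos ((((n i : ℕ) : ℤ) - if i = j then 1 else 0)) (hb i)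
        omega⟩ : Fin (q i))) = fpred q hq j n := by
    funext i
    rcases eq_or_ne i j with rfl | hij
    · simp only [if_pos rfl, if_true, fpred, Function.update_self]
      apply Fin.ext
      simp only
      rcases Nat.eq_zero_or_pos (n i : ℕ) with h0 | h0
      · rw [h0]
        have : ((0:ℕ) : ℤ) - 1 = -1 := by norm_num
        rw [this, (neg_one_facts (q i : ℤ) (hb i)).2]
        have hq1 : 1 ≤ q i := hq i
        have h2 : (0 + (q i - 1)) % q i = q i - 1 := by
          rw [Nat.zero_add, Nat.mod_eq_of_lt (by omega)]
        omega
      · have hlt : ((n i : ℕ) : ℤ) - 1 < (q i : ℤ) := by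
          have := (n i).2; omega
        rw [Int.emod_eq_of_lt (by omega) hlt]
        have h2 : ((n i:ℕ) + (q i - 1)) % q i = (n i : ℕ) - 1 := by
          have hv := (n i).2
          have : (n i:ℕ) + (q i - 1) = ((n i:ℕ) - 1) + q i := by omega
          rw [this, Nat.add_mod_right, Nat.mod_eq_of_lt (by omega)]
        omega
    · simp only [if_neg hij, sub_zero, fpred, Function.update_of_ne hij]
      apply Fin.ext
      simp only
      rw [Int.emod_eq_of_lt (by positivity) (by exact_mod_cast (n i).2)]
      simp
  rw [harg]
  have hprod : (∏ i, z i ^ ((((n i : ℕ) : ℤ) - if i = j then 1 else 0) / (q i : ℤ)))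
      = (if (n j : ℕ) = 0 then (z j) ^ (-1:ℤ) else 1) := by
    rw [Finset.prod_eq_single j]
    · simp only [if_pos rfl, if_true]
      rcases Nat.eq_zero_or_pos (n j : ℕ) with h0 | h0
      · rw [if_pos h0, h0]
        have : ((0:ℕ) : ℤ) - 1 = -1 := by norm_num
        rw [this, (neg_one_facts (q j : ℤ) (hb j)).1]
      · rw [if_neg (by omega)]
        have hlt : ((n j : ℕ) : ℤ) - 1 < (q j : ℤ) := by
          have := (n j).2; omega
        rw [Int.ediv_eq_zero_of_lt (by omega) hlt]
        simp
    · intro i _ hij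
      rw [if_neg hij, sub_zero,
        Int.ediv_eq_zero_of_lt (by positivity) (by exact_mod_cast (n i).2)]
      simp
    · simp
  rw [hprod, Pi.single_apply]
  congr 1
  by_cases h : n' = fpred q hq j n
  · rw [if_pos h.symm, if_pos h]
  · rw [if_neg (fun hh => h hh.symm), if_neg h]
variable (V : (Fin d → ℤ) → ℝ) (j0 : Fin d)

lemma DVmat_apply (z : Fin d → ℂ) (n n' : (i : Fin d) → Fin (q i)) :
    DVmat q hq V z n n' =
      (∑ j, ((if (n j : ℕ) + 1 = q j then z j else 1) * (if n' = fsucc q hq j n then 1 else 0)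
        + (if (n j : ℕ) = 0 then z j ^ (-1:ℤ) else 1) * (if n' = fpred q hq j n then 1 else 0)))
      + (V fun i => ((n i : ℕ) : ℤ)) * (if n = n' then 1 else 0) := by
  unfold DVmat
  simp only [Matrix.of_apply]
  congr 1
  refine Finset.sum_congr rfl fun j _ => ?_
  rw [extPer_single_add q hq z n n' j, extPer_single_sub q hq z n n' j]

def Amat : Matrix ((i : Fin d) → Fin (q i)) ((i : Fin d) → Fin (q i)) ℂ :=
  Matrix.of fun n n' => if n' = fsucc q hq j0 n then 1 else 0

def Bmat : Matrix ((i : Fin d) → Fin (q i)) ((i : Fin d) → Fin (q i)) ℂ :=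
  Matrix.of fun n n' => if n' = fpred q hq j0 n then 1 else 0

def Cmat (c : Fin d → ℂ) : Matrix ((i : Fin d) → Fin (q i)) ((i : Fin d) → Fin (q i)) ℂ :=
  Matrix.of fun n n' =>
    (∑ j ∈ Finset.univ.erase j0,
      ((if (n j : ℕ) + 1 = q j then c j else 1) * (if n' = fsucc q hq j n then 1 else 0)
        + (if (n j : ℕ) = 0 then c j ^ (-1:ℤ) else 1) * (if n' = fpred q hq j n then 1 else 0)))
    + (V fun i => ((n i : ℕ) : ℤ)) * (if n = n' then 1 else 0)

def Phi (s : ℂ) : Matrix ((i : Fin d) → Fin (q i)) ((i : Fin d) → Fin (q i)) ℂ :=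
  Matrix.diagonal fun n => s ^ (((n j0 : ℕ) : ℤ))

def Psi (s : ℂ) : Matrix ((i : Fin d) → Fin (q i)) ((i : Fin d) → Fin (q i)) ℂ :=
  Matrix.diagonal fun n => s ^ (-((n j0 : ℕ) : ℤ))

lemma Phi_mul_Psi (s : ℂ) (hs : s ≠ 0) : Phi q j0 s * Psi q j0 s = 1 := by
  unfold Phi Psi
  rw [Matrix.diagonal_mul_diagonal]
  have : (fun n : (i : Fin d) → Fin (q i) => s ^ (((n j0 : ℕ) : ℤ)) * s ^ (-((n j0 : ℕ) : ℤ)))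
      = fun _ => 1 := by
    funext n
    rw [← zpow_add₀ hs]
    simp
  rw [this, Matrix.diagonal_one]

lemma conj_eq (c : Fin d → ℂ) (s : ℂ) (hs : s ≠ 0) :
    DVmat q hq V (fun j => if j = j0 then s ^ (q j0) else c j)
      = Phi q j0 s * (s • Amat q hq j0 + s⁻¹ • Bmat q hq j0 + Cmat q hq V j0 c)
          * Psi q j0 s := by
  ext n n'
  rw [Matrix.mul_assoc]
  simp only [Phi, Psi]
  rw [Matrix.diagonal_mul, Matrix.mul_diagonal, DVmat_apply]
  simp only [Matrix.add_apply, Matrix.smul_apply, Amat, Bmat, Cmat, Matrix.of_apply,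
    smul_eq_mul]
  rw [← Finset.sum_erase_add _ _ (Finset.mem_univ j0)]
  simp only [if_pos rfl, if_true]
  set a : ℤ := ((n j0 : ℕ) : ℤ) with ha_def
  set a' : ℤ := ((n' j0 : ℕ) : ℤ) with ha'_def
  have hz3 : ∀ u v : ℤ, s ^ u * s * s ^ v = s ^ (u + 1 + v) := by
    intro u v; rw [zpow_add₀ hs, zpow_add₀ hs, zpow_one]
  have hz3' : ∀ u v : ℤ, s ^ u * s⁻¹ * s ^ v = s ^ (u + (-1) + v) := by
    intro u v; rw [zpow_add₀ hs, zpow_add₀ hs, zpow_neg_one]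
  have hzc : ∀ (X : ℂ) (u : ℤ), s ^ u * X * s ^ (-u) = X := by
    intro X u
    rw [mul_comm (s ^ u) X, mul_assoc, ← zpow_add₀ hs]
    simp
  have hsucc : (if (n j0 : ℕ) + 1 = q j0 then s ^ q j0 else 1)
        * (if n' = fsucc q hq j0 n then 1 else 0)
      = s ^ a * s * (if n' = fsucc q hq j0 n then 1 else 0) * s ^ (-a') := by
    by_cases hδ : n' = fsucc q hq j0 n
    · rw [if_pos hδ, mul_one, mul_one, hz3 a (-a')]
      have ha' : (n' j0 : ℕ) = ((n j0 : ℕ) + 1) % q j0 := by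
        rw [hδ]; simp [fsucc]
      by_cases hw : (n j0 : ℕ) + 1 = q j0
      · rw [if_pos hw, ← zpow_natCast s (q j0)]
        congr 1
        have h0 : (n' j0 : ℕ) = 0 := by rw [ha', hw, Nat.mod_self]
        have e1 : a' = 0 := by rw [ha'_def, h0]; simp
        have e2 : a + 1 = ((q j0 : ℕ) : ℤ) := by rw [ha_def]; exact_mod_cast hw
        omega
      · rw [if_neg hw]
        have h1 : (n' j0 : ℕ) = (n j0 : ℕ) + 1 := by
          rw [ha', Nat.mod_eq_of_lt (lt_of_le_of_ne (by have := (n j0).2; omega) hw)]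
        have e1 : a' = a + 1 := by rw [ha'_def, ha_def, h1]; push_cast; ring
        rw [show a + 1 + -a' = 0 by omega, zpow_zero]
    · rw [if_neg hδ]; simp
  have hpred : (if (n j0 : ℕ) = 0 then (s ^ q j0) ^ (-1:ℤ) else 1)
        * (if n' = fpred q hq j0 n then 1 else 0)
      = s ^ a * s⁻¹ * (if n' = fpred q hq j0 n then 1 else 0) * s ^ (-a') := by
    by_cases hδ : n' = fpred q hq j0 n
    · rw [if_pos hδ, mul_one, mul_one, hz3' a (-a')]
      have ha' : (n' j0 : ℕ) = ((n j0 : ℕ) + (q j0 - 1)) % q j0 := by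
        rw [hδ]; simp [fpred]
      by_cases hw : (n j0 : ℕ) = 0
      · rw [if_pos hw, ← zpow_natCast s (q j0), ← zpow_mul]
        congr 1
        have h0 : (n' j0 : ℕ) = q j0 - 1 := by
          rw [ha', hw, Nat.zero_add, Nat.mod_eq_of_lt (by have := hq j0; omega)]
        have e1 : a' = ((q j0 : ℕ) : ℤ) - 1 := by
          rw [ha'_def, h0]; have := hq j0; push_cast; omega
        have e2 : a = 0 := by rw [ha_def, hw]; simp
        have e3 : (1:ℤ) ≤ ((q j0 : ℕ) : ℤ) := by exact_mod_cast hq j0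
        omega
      · rw [if_neg hw]
        have hv := (n j0).2
        have h1 : (n' j0 : ℕ) = (n j0 : ℕ) - 1 := by
          rw [ha', show (n j0 : ℕ) + (q j0 - 1) = ((n j0 : ℕ) - 1) + q j0 by omega,
            Nat.add_mod_right, Nat.mod_eq_of_lt (by omega)]
        have e1 : a' = a - 1 := by
          rw [ha'_def, ha_def, h1]; push_cast [Nat.cast_sub (by omega : 1 ≤ (n j0 : ℕ))]; ring
        rw [show a + (-1) + -a' = 0 by omega, zpow_zero]
    · rw [if_neg hδ]; simp
  have hrest : (∑ j ∈ Finset.univ.erase j0,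
        ((if (n j : ℕ) + 1 = q j then (if j = j0 then s ^ (q j0) else c j) else 1)
            * (if n' = fsucc q hq j n then 1 else 0)
          + (if (n j : ℕ) = 0 then (if j = j0 then s ^ (q j0) else c j) ^ (-1:ℤ) else 1)
            * (if n' = fpred q hq j n then 1 else 0)))
        + (V fun i => ((n i : ℕ) : ℤ)) * (if n = n' then 1 else 0)
      = s ^ a * ((∑ j ∈ Finset.univ.erase j0,
        ((if (n j : ℕ) + 1 = q j then c j else 1) * (if n' = fsucc q hq j n then 1 else 0)
          + (if (n j : ℕ) = 0 then c j ^ (-1:ℤ) else 1) * (if n' = fpred q hq j n then 1 else 0)))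
        + (V fun i => ((n i : ℕ) : ℤ)) * (if n = n' then 1 else 0)) * s ^ (-a') := by
    have hcancel : ∀ (X : ℂ), (n' j0 : ℕ) = (n j0 : ℕ) → s ^ a * X * s ^ (-a') = X := by
      intro X h
      have : a' = a := by rw [ha'_def, ha_def, h]
      rw [this]; exact hzc X a
    rw [mul_add, add_mul]
    congr 1
    · rw [Finset.mul_sum, Finset.sum_mul]
      refine Finset.sum_congr rfl fun j hj => ?_
      have hj0 : j ≠ j0 := Finset.ne_of_mem_erase hj
      rw [if_neg hj0]
      by_cases hδ1 : n' = fsucc q hq j n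
      · have hn : (n' j0 : ℕ) = (n j0 : ℕ) := by
          rw [hδ1]; simp [fsucc, Function.update_of_ne (Ne.symm hj0)]
        rw [hcancel _ hn]
      · by_cases hδ2 : n' = fpred q hq j n
        · have hn : (n' j0 : ℕ) = (n j0 : ℕ) := by
            rw [hδ2]; simp [fpred, Function.update_of_ne (Ne.symm hj0)]
          rw [hcancel _ hn]
        · rw [if_neg hδ1, if_neg hδ2]
          simp
    · by_cases hδ : n = n'
      · exact (hcancel _ (by rw [hδ])).symm
      · rw [if_neg hδ]; simp
  linear_combination hsucc + hpred + hrest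

lemma fsucc_iterate (k : ℕ) (n : (i : Fin d) → Fin (q i)) (i : Fin d) :
    (((fsucc q hq j0)^[k]) n) i
      = if h : i = j0 then ⟨((n i : ℕ) + k) % q i, Nat.mod_lt _ (hq i)⟩ else n i := by
  induction k generalizing n with
  | zero =>
    simp only [Function.iterate_zero, id_eq]
    split
    · next h =>
      apply Fin.ext; simp only [add_zero]
      exact (Nat.mod_eq_of_lt (n i).2).symm
    · rfl
  | succ k ih =>
    rw [Function.iterate_succ_apply, ih]
    split
    · next h =>
      subst h
      apply Fin.ext
      simp only [fsucc, Function.update_self]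
      rw [Nat.mod_add_mod]
      congr 1
      omega
    · next h =>
      simp [fsucc, Function.update_of_ne h]

lemma fsucc_iterate_q (n : (i : Fin d) → Fin (q i)) :
    ((fsucc q hq j0)^[q j0]) n = n := by
  funext i
  rw [fsucc_iterate]
  split
  · next h =>
    subst h
    apply Fin.ext
    show ((n i : ℕ) + q i) % q i = (n i : ℕ)
    rw [Nat.add_mod_right, Nat.mod_eq_of_lt (n i).2]
  · rfl

lemma Amat_pow (k : ℕ) :
    (Amat q hq j0) ^ k
      = Matrix.of (fun n n' => if n' = ((fsucc q hq j0)^[k]) n then (1:ℂ) else 0) := by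
  induction k with
  | zero =>
    ext n n'
    simp only [pow_zero, Function.iterate_zero, id_eq, Matrix.of_apply, Matrix.one_apply]
    by_cases h : n = n'
    · simp [h]
    · simp [h, Ne.symm h]
  | succ k ih =>
    rw [pow_succ', ih]
    ext n m
    rw [Matrix.mul_apply]
    simp only [Amat, Matrix.of_apply]
    rw [Finset.sum_eq_single (fsucc q hq j0 n)]
    · rw [if_pos rfl, one_mul, Function.iterate_succ_apply]
    · intro b _ hb
      rw [if_neg hb, zero_mul]
    · simp

lemma Amat_pow_q : (Amat q hq j0) ^ (q j0) = 1 := by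
  rw [Amat_pow]
  ext n n'
  rw [Matrix.of_apply, fsucc_iterate_q, Matrix.one_apply]
  by_cases h : n = n'
  · rw [if_pos h.symm, if_pos h]
  · rw [if_neg (fun hh => h hh.symm), if_neg h]

theorem nonempty_W (hq : ∀ j, 0 < q j) : Nonempty ((i : Fin d) → Fin (q i)) := ⟨fun i => ⟨0, hq i⟩⟩

lemma Amat_mulVec (v : ((i : Fin d) → Fin (q i)) → ℂ) (n : (i : Fin d) → Fin (q i)) :
    (Amat q hq j0).mulVec v n = v (fsucc q hq j0 n) := by
  unfold Matrix.mulVec dotProduct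
  simp only [Amat, Matrix.of_apply]
  rw [Finset.sum_eq_single (fsucc q hq j0 n)]
  · rw [if_pos rfl, one_mul]
  · intro b _ hb; rw [if_neg hb, zero_mul]
  · simp

lemma det_Amat_sub_one : (Amat q hq j0 - 1).det = 0 := by
  rw [← Matrix.exists_mulVec_eq_zero_iff]
  have hne : Nonempty ((i : Fin d) → Fin (q i)) := ⟨fun i => ⟨0, hq i⟩⟩
  refine ⟨fun _ => 1, ?_, ?_⟩
  · intro hcontra
    have := congrFun hcontra (Classical.arbitrary _)
    simp at this
  · funext n
    rw [Matrix.sub_mulVec, Matrix.one_mulVec, Pi.sub_apply, Amat_mulVec]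
    simp

lemma det_Amat_sub_smul (μ : ℂ) (hμ : μ ^ (q j0) ≠ 1) :
    (Amat q hq j0 - μ • 1).det ≠ 0 := by
  intro hdet
  obtain ⟨v, hv0, hv⟩ := (Matrix.exists_mulVec_eq_zero_iff).mpr hdet
  have hAv : (Amat q hq j0).mulVec v = μ • v := by
    rw [Matrix.sub_mulVec, sub_eq_zero] at hv
    rw [hv, Matrix.smul_mulVec, Matrix.one_mulVec]
  have hpow : ∀ k : ℕ, ((Amat q hq j0) ^ k).mulVec v = μ ^ k • v := by
    intro k
    induction k with
    | zero => simp [Matrix.one_mulVec]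
    | succ k ih =>
      rw [pow_succ', ← Matrix.mulVec_mulVec, ih, Matrix.mulVec_smul, hAv,
        smul_smul, pow_succ']
      rw [mul_comm]
  have hq0 := hpow (q j0)
  rw [Amat_pow_q, Matrix.one_mulVec] at hq0
  obtain ⟨x, hx⟩ := Function.ne_iff.mp hv0
  apply hμ
  have := congrFun hq0 x
  simp only [Pi.smul_apply, smul_eq_mul] at this
  have h2 : (μ ^ q j0 - 1) * v x = 0 := by linear_combination -this
  rcases mul_eq_zero.mp h2 with h | h
  · exact sub_eq_zero.mp h
  · exact absurd h hx

lemma det_conj (M : Matrix ((i : Fin d) → Fin (q i)) ((i : Fin d) → Fin (q i)) ℂ)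
    (s lam : ℂ) (hs : s ≠ 0) :
    (Phi q j0 s * M * Psi q j0 s - lam • 1).det = (M - lam • 1).det := by
  have h1 : Phi q j0 s * M * Psi q j0 s - lam • 1
      = Phi q j0 s * (M - lam • 1) * Psi q j0 s := by
    rw [Matrix.mul_sub, Matrix.sub_mul]
    congr 1
    rw [Matrix.mul_smul, Matrix.mul_one, Matrix.smul_mul, Phi_mul_Psi q j0 s hs]
  rw [h1, Matrix.det_mul, Matrix.det_mul, mul_comm ((Phi q j0 s).det), mul_assoc,
    ← Matrix.det_mul, Phi_mul_Psi q j0 s hs]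
  simp

end S14


end

theorem statement14
    {d : ℕ} (hd : 0 < d) (q : Fin d → ℕ) (hq : ∀ j, 0 < q j)
    (V : (Fin d → ℤ) → ℝ)
    (hper : ∀ (n : Fin d → ℤ) (j : Fin d),
      V (fun i => n i + if i = j then (q j : ℤ) else 0) = V n)
 :
    ∀ ζ : Fin d → ℂ, (∀ j, ‖ζ j‖ = 1) →
      (fun j => ζ j ^ q j) ≠ (fun _ => (1 : ℂ)) →
      ∃ (z : Fin d → ℂ) (lam : ℂ), (∀ j, z j ≠ 0) ∧
        PVfun q hq V (fun j => z j ^ q j) lam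
          ≠ PVfun q hq V (fun j => (ζ j * z j) ^ q j) lam := by
  intro ζ hζ hne
  by_contra hcon
  push_neg at hcon
  obtain ⟨j0, hj0⟩ : ∃ j0, ζ j0 ^ q j0 ≠ 1 := by
    by_contra h; push_neg at h; exact hne (funext h)
  have hζ0 : ζ j0 ≠ 0 := by
    intro h
    have := hζ j0
    rw [h] at this; simp at this
  set W := ((i : Fin d) → Fin (q i))
  set μ : ℂ := ζ j0 with hμdef
  set A := S14.Amat q hq j0 with hA
  set B := S14.Bmat q hq j0 with hB
  set C1 := S14.Cmat q hq V j0 (fun _ => (1:ℂ)) with hC1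
  set C2 := S14.Cmat q hq V j0 (fun j => ζ j ^ q j) with hC2
  set g₁ : ℂ → ℂ := fun u => (A - μ • 1 + (u^2) • B + u • C1).det with hg₁
  set g₂ : ℂ → ℂ := fun u => (μ • A - μ • 1 + (μ⁻¹ * u^2) • B + u • C2).det with hg₂
  have heq : Set.EqOn g₁ g₂ {(0:ℂ)}ᶜ := by
    intro u hu
    have hu0 : u ≠ 0 := hu
    have hs : (u⁻¹ : ℂ) ≠ 0 := inv_ne_zero hu0
    have hmain := hcon (fun j => if j = j0 then u⁻¹ else 1) (u⁻¹ * μ)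
      (fun j => by split <;> simp [hs])
    unfold PVfun at hmain
    have harg1 : (fun j => (if j = j0 then u⁻¹ else (1:ℂ)) ^ q j)
        = (fun j => if j = j0 then u⁻¹ ^ q j0 else (fun _ => (1:ℂ)) j) := by
      funext j
      by_cases h : j = j0
      · subst h; rw [if_pos rfl, if_pos rfl]
      · rw [if_neg h, if_neg h, one_pow]
    have harg2 : (fun j => (ζ j * if j = j0 then u⁻¹ else (1:ℂ)) ^ q j)
        = (fun j => if j = j0 then (ζ j0 * u⁻¹) ^ q j0 else (fun i => ζ i ^ q i) j) := by
      funext j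
      by_cases h : j = j0
      · subst h; rw [if_pos rfl, if_pos rfl]
      · rw [if_neg h, if_neg h, mul_one]
    rw [harg1, harg2, S14.conj_eq q hq V j0 _ _ hs,
      S14.conj_eq q hq V j0 _ _ (mul_ne_zero hζ0 hs),
      S14.det_conj q j0 _ _ _ hs, S14.det_conj q j0 _ _ _ (mul_ne_zero hζ0 hs)]
      at hmain
    have e1 : u⁻¹ • A + (u⁻¹)⁻¹ • B + C1 - (u⁻¹ * μ) • (1 : Matrix W W ℂ)
        = u⁻¹ • (A - μ • 1 + (u^2) • B + u • C1) := by
      have h2 : u⁻¹ * u^2 = (u⁻¹)⁻¹ := by field_simp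
      have h3 : u⁻¹ * u = 1 := inv_mul_cancel₀ hu0
      simp only [smul_add, smul_sub, smul_smul]
      rw [h2, h3, one_smul]
      abel
    have e2 : (ζ j0 * u⁻¹) • A + (ζ j0 * u⁻¹)⁻¹ • B + C2 - (u⁻¹ * μ) • (1 : Matrix W W ℂ)
        = u⁻¹ • (μ • A - μ • 1 + (μ⁻¹ * u^2) • B + u • C2) := by
      have h2 : u⁻¹ * (μ⁻¹ * u^2) = (ζ j0 * u⁻¹)⁻¹ := by
        rw [hμdef]; field_simp
      have h3 : u⁻¹ * u = 1 := inv_mul_cancel₀ hu0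
      have h4 : u⁻¹ * μ = ζ j0 * u⁻¹ := by rw [hμdef]; ring
      simp only [smul_add, smul_sub, smul_smul]
      rw [h2, h3, one_smul, h4]
      abel
    rw [e1, e2, Matrix.det_smul, Matrix.det_smul] at hmain
    have hcard : ((u⁻¹) ^ Fintype.card W : ℂ) ≠ 0 := pow_ne_zero _ hs
    exact mul_left_cancel₀ hcard hmain
  have hcont1 : Continuous g₁ := by
    apply Continuous.matrix_det
    fun_prop
  have hcont2 : Continuous g₂ := by
    apply Continuous.matrix_det
    fun_prop
  have h0 : g₁ 0 = g₂ 0 := by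
    have := Continuous.ext_on (dense_compl_singleton (0:ℂ)) hcont1 hcont2 heq
    exact congrFun this 0
  replace h0 : (A - μ • 1 + (0:ℂ)^2 • B + (0:ℂ) • C1).det
      = (μ • A - μ • 1 + (μ⁻¹ * (0:ℂ)^2) • B + (0:ℂ) • C2).det := h0
  have hzero : (μ • A - μ • 1 + (μ⁻¹ * (0:ℂ)^2) • B + (0:ℂ) • C2).det = 0 := by
    have : μ • A - μ • 1 + (μ⁻¹ * (0:ℂ)^2) • B + (0:ℂ) • C2 = μ • (A - 1) := by
      rw [smul_sub]
      simp
    rw [this, Matrix.det_smul, S14.det_Amat_sub_one q hq j0]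
    simp
  have hnonzero : (A - μ • 1 + (0:ℂ)^2 • B + (0:ℂ) • C1).det ≠ 0 := by
    have : A - μ • 1 + (0:ℂ)^2 • B + (0:ℂ) • C1 = A - μ • 1 := by simp
    rw [this]
    exact S14.det_Amat_sub_smul q hq j0 μ hj0
  exact hnonzero (by rw [h0]; exact hzero)
end

section
/- Let h(z,λ) = ∏_{0 ≤ n_j ≤ q_j−1, 1 ≤ j ≤ d} ((Σ_{j=1}^d ρ^j_{n_j} z_j) − λ), where ρ^j_{n_j} = e^{2πi n_j/q_j}. Then for any ζ = (ζ_1,…,ζ_d) ∈ ℂ^d with |ζ_j| = 1 for j = 1,…,d and (ζ_1^{q_1},…,ζ_d^{q_d}) ≠ 1_d, one has h(z,λ) ≢ h(ζ⊙z,λ) as polynomials in (z,λ), where ζ⊙z = (ζ_1z_1,…,ζ_dz_d). -/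
open MeasureTheory Polynomial

theorem statement17
    {d : ℕ} (hd : 0 < d) (q : Fin d → ℕ) (hq : ∀ j, 0 < q j)
    (ζ : Fin d → ℂ) (hζ : ∀ j, ‖ζ j‖ = 1)
    (hζq : (fun j => ζ j ^ q j) ≠ (fun _ => (1 : ℂ))) :
    ∃ (z : Fin d → ℂ) (lam : ℂ),
      hFun q z lam ≠ hFun q (fun j => ζ j * z j) lam := by
  obtain ⟨j0, hj0⟩ : ∃ j, ζ j ^ q j ≠ 1 := by
    by_contra h; push_neg at h; exact hζq (funext h)
  refine ⟨fun j => if j = j0 then 1 else 0, 1, ?_⟩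
  have key : ∀ (j : Fin d) (n : Fin (q j)),
      Complex.exp (2 * (Real.pi : ℂ) * Complex.I * ((n : ℕ) : ℂ) / ((q j : ℕ) : ℂ)) ^ (q j)
        = 1 := by
    intro j n
    rw [← Complex.exp_nat_mul]
    have hqj : ((q j : ℕ) : ℂ) ≠ 0 := by exact_mod_cast (hq j).ne'
    have h2 : ((q j : ℕ) : ℂ) * (2 * (Real.pi : ℂ) * Complex.I * ((n : ℕ) : ℂ) / ((q j : ℕ) : ℂ))
        = ((n : ℕ) : ℤ) * (2 * (Real.pi : ℂ) * Complex.I) := by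
      push_cast; field_simp
    rw [h2, Complex.exp_int_mul_two_pi_mul_I]
  have hL : hFun q (fun j => if j = j0 then (1:ℂ) else 0) 1 = 0 := by
    unfold hFun
    apply Finset.prod_eq_zero (Finset.mem_univ (fun j => (⟨0, hq j⟩ : Fin (q j))))
    simp
  have hR : hFun q (fun j => ζ j * if j = j0 then (1:ℂ) else 0) 1 ≠ 0 := by
    unfold hFun
    rw [Finset.prod_ne_zero_iff]
    intro n _
    have hsum : (∑ j, Complex.exp (2 * (Real.pi : ℂ) * Complex.I * ((n j : ℕ) : ℂ) / ((q j : ℕ) : ℂ))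
          * (ζ j * if j = j0 then (1:ℂ) else 0))
        = Complex.exp (2 * (Real.pi : ℂ) * Complex.I * ((n j0 : ℕ) : ℂ) / ((q j0 : ℕ) : ℂ)) * ζ j0 := by
      rw [Finset.sum_eq_single j0]
      · simp
      · intro b _ hb; simp [hb]
      · simp
    rw [hsum]
    intro hcon
    apply hj0
    have hθ : Complex.exp (2 * (Real.pi : ℂ) * Complex.I * ((n j0 : ℕ) : ℂ) / ((q j0 : ℕ) : ℂ)) * ζ j0 = 1 :=
      sub_eq_zero.mp hcon
    have := congrArg (· ^ (q j0)) hθ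
    simp only [mul_pow, one_pow, key j0 (n j0), one_mul] at this
    exact this
  rw [hL]
  exact fun h => hR h.symm
end
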